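/- Let d, n, T ≥ 1 and let K ⊆ [0,1]^d be convex. For each t ∈ {1,…,T} and j ∈ {1,…,n}, let f_t^j : ℝ^d → ℝ be continuous DR-submodular, nonnegative and monotone on X = [0,1]^d (x ≤ y implies f_t^j(x) ≤ f_t^j(y)) with f_t^j(0) = 0, differentiable on X with continuous gradient satisfying ‖∇f_t^j(x)‖ ≤ G for all x ∈ X, let x̂_t^j ∈ K, and define g_t^j(x) = ∫_0^1 e^{z−1} · ∇f_t^j(z x) dz. Then for every i ∈ {1,…,n} and every x ∈ K: (1 − 1/e)·Σ_{t=1}^T Σ_{j=1}^n f_t^j(x) − Σ_{t=1}^T Σ_{j=1}^n f_t^j(x̂_t^i) ≤ Σ_{t=1}^T Σ_{j=1}^n ⟨g_t^j(x̂_t^j), x − x̂_t^i⟩ + 2G·Σ_{t=1}^T Σ_{j=1}^n ‖x̂_t^j − x̂_t^i‖. -/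

import Mathlib

open MeasureTheory Finset Set intervalIntegral

noncomputable section

/-- The unit cube `[0,1]^d` in `ℝ^d` (with Euclidean structure). -/
def cube (d : ℕ) : Set (EuclideanSpace ℝ (Fin d)) :=
  {x | ∀ i, x i ∈ Set.Icc (0 : ℝ) 1}

/-- `f` is continuous DR-submodular on the unit cube `[0,1]^d`: for coordinatewise
comparable points `x ≤ y` in the cube and any feasible move of size `z ≥ 0` along a
coordinate direction, the gain at `x` dominates the gain at `y`. -/
def DRSubmodularOn (d : ℕ) (f : EuclideanSpace ℝ (Fin d) → ℝ) : Prop :=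
  ∀ x y : EuclideanSpace ℝ (Fin d), x ∈ cube d → y ∈ cube d → (∀ i, x i ≤ y i) →
    ∀ (j : Fin d) (z : ℝ), 0 ≤ z →
      x + z • EuclideanSpace.single j (1 : ℝ) ∈ cube d →
      y + z • EuclideanSpace.single j (1 : ℝ) ∈ cube d →
      f (y + z • EuclideanSpace.single j (1 : ℝ)) - f y ≤
        f (x + z • EuclideanSpace.single j (1 : ℝ)) - f x

section Aux

variable {d : ℕ}

lemma add_single_apply (x : EuclideanSpace ℝ (Fin d)) (z : ℝ) (j i : Fin d) :
    (x + z • EuclideanSpace.single j (1:ℝ)) i = if i = j then x i + z else x i := by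
  simp only [PiLp.add_apply, PiLp.smul_apply, EuclideanSpace.single_apply, smul_eq_mul]
  by_cases h : i = j <;> simp [h]

lemma cube_convex : Convex ℝ (cube d) := by
  intro x hx y hy a b ha hb hab i
  have h1 := hx i
  have h2 := hy i
  simp only [PiLp.add_apply, PiLp.smul_apply, smul_eq_mul, Set.mem_Icc] at h1 h2 ⊢
  constructor <;> nlinarith

lemma zero_mem_cube : (0 : EuclideanSpace ℝ (Fin d)) ∈ cube d := by
  intro i; simp [cube]

lemma smul_mem_cube {y : EuclideanSpace ℝ (Fin d)} (hy : y ∈ cube d) {z : ℝ}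
    (hz : z ∈ Set.Icc (0:ℝ) 1) : z • y ∈ cube d := by
  intro i
  have := hy i
  constructor
  · exact mul_nonneg hz.1 this.1
  · calc z * y i ≤ 1 * 1 := mul_le_mul hz.2 this.2 this.1 one_pos.le
    _ = 1 := one_mul 1

/-- chain rule along a line: derivative of `f (a + t • v)` within `Icc`. -/
lemma deriv_along {f : EuclideanSpace ℝ (Fin d) → ℝ} {f' : EuclideanSpace ℝ (Fin d) → EuclideanSpace ℝ (Fin d)}
    (hgrad : ∀ x ∈ cube d, HasGradientWithinAt f (f' x) (cube d) x)
    (a v : EuclideanSpace ℝ (Fin d)) {s : Set ℝ} (hs : ∀ z ∈ s, a + z • v ∈ cube d)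
    {t : ℝ} (ht : t ∈ s) :
    HasDerivWithinAt (fun z => f (a + z • v)) (inner ℝ (f' (a + t • v)) v : ℝ) s t := by
  have hγ : HasDerivWithinAt (fun z : ℝ => a + z • v) v s t := by
    simpa using (((hasDerivAt_id t).smul_const v).const_add a).hasDerivWithinAt
  have hf := (hgrad _ (hs t ht)).hasFDerivWithinAt
  have := hf.comp_hasDerivWithinAt t hγ (fun z hz => hs z hz)
  simpa [Function.comp_def] using this

lemma deriv_le_of_slope_le {φ ψ : ℝ → ℝ} {D E : ℝ} {δ : ℝ} (hδ : 0 < δ)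
    (hφ : HasDerivWithinAt φ D (Set.Icc 0 δ) 0)
    (hψ : HasDerivWithinAt ψ E (Set.Icc 0 δ) 0)
    (h : ∀ z ∈ Set.Ioc 0 δ, φ z - φ 0 ≤ ψ z - ψ 0) : D ≤ E := by
  rw [hasDerivWithinAt_iff_tendsto_slope] at hφ hψ
  have hset : Set.Icc (0:ℝ) δ \ {0} = Set.Ioc 0 δ := by
    ext z; simp only [Set.mem_diff, Set.mem_Icc, Set.mem_singleton_iff, Set.mem_Ioc]
    constructor
    · rintro ⟨⟨h1, h2⟩, h3⟩; exact ⟨lt_of_le_of_ne h1 (Ne.symm h3), h2⟩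
    · rintro ⟨h1, h2⟩; exact ⟨⟨h1.le, h2⟩, h1.ne'⟩
  rw [hset, nhdsWithin_Ioc_eq_nhdsGT hδ] at hφ hψ
  refine le_of_tendsto_of_tendsto hφ hψ ?_
  filter_upwards [Ioc_mem_nhdsGT_of_mem (Set.left_mem_Ico.2 hδ)] with z hz
  have hz0 : (0:ℝ) < z := hz.1
  simp only [slope_def_field, div_eq_mul_inv]
  have : (0:ℝ) < (z - 0)⁻¹ := by simpa using inv_pos.2 hz0
  exact mul_le_mul_of_nonneg_right (h z hz) this.le

lemma add_single_mem {x : EuclideanSpace ℝ (Fin d)} (hx : x ∈ cube d) {z : ℝ} (hz : 0 ≤ z)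
    {j : Fin d} (hj : x j + z ≤ 1) : x + z • EuclideanSpace.single j (1:ℝ) ∈ cube d := by
  intro i
  have hxi := hx i
  rw [add_single_apply]
  by_cases h : i = j
  · subst h
    simp only [if_pos rfl]
    exact ⟨le_add_of_le_of_nonneg hxi.1 hz, hj⟩
  · simpa [if_neg h] using hxi

section OneFun
variable {f : EuclideanSpace ℝ (Fin d) → ℝ} {f' : EuclideanSpace ℝ (Fin d) → EuclideanSpace ℝ (Fin d)}
  (hsub : DRSubmodularOn d f)
  (hmono : ∀ x ∈ cube d, ∀ y ∈ cube d, (∀ i, x i ≤ y i) → f x ≤ f y)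
  (hgrad : ∀ x ∈ cube d, HasGradientWithinAt f (f' x) (cube d) x)
  (hcont : ContinuousOn f' (cube d))

include hgrad

/-- derivative along `e_j` within the segment. -/
lemma derivSingle0 {x : EuclideanSpace ℝ (Fin d)} (hx : x ∈ cube d) {j : Fin d} {δ : ℝ}
    (hδpos : 0 < δ) (hδ : x j + δ ≤ 1) :
    HasDerivWithinAt (fun z => f (x + z • EuclideanSpace.single j (1:ℝ))) (f' x j)
      (Set.Icc 0 δ) 0 := by
  have h := deriv_along hgrad x (EuclideanSpace.single j (1:ℝ))
    (s := Set.Icc 0 δ) (fun z hz => add_single_mem hx hz.1 (by linarith [hz.2])) (Set.left_mem_Icc.2 hδpos.le)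
  have : (inner ℝ (f' (x + (0:ℝ) • EuclideanSpace.single j (1:ℝ))) (EuclideanSpace.single j (1:ℝ)) : ℝ)
      = f' x j := by
    rw [EuclideanSpace.inner_single_right]; simp
  rwa [this] at h

include hmono in
lemma grad_nonneg' {x : EuclideanSpace ℝ (Fin d)} (hx : x ∈ cube d) {j : Fin d}
    (hj : x j < 1) : 0 ≤ f' x j := by
  set δ := 1 - x j with hδdef
  have hδpos : 0 < δ := by linarith
  refine deriv_le_of_slope_le hδpos (hasDerivWithinAt_const 0 _ (0:ℝ))
    (derivSingle0 hgrad hx hδpos (by linarith)) ?_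
  intro z hz
  have hmem : x + z • EuclideanSpace.single j (1:ℝ) ∈ cube d :=
    add_single_mem hx hz.1.le (by linarith [hz.2])
  have : f x ≤ f (x + z • EuclideanSpace.single j (1:ℝ)) := by
    refine hmono x hx _ hmem fun i => ?_
    rw [add_single_apply]
    by_cases h : i = j
    · simp only [if_pos h]; linarith [hz.1.le]
    · simp [if_neg h]
  simp only [zero_smul, add_zero, sub_self]
  linarith [this]

include hsub in
lemma grad_anti' {x y : EuclideanSpace ℝ (Fin d)} (hx : x ∈ cube d) (hy : y ∈ cube d)
    (hxy : ∀ i, x i ≤ y i) {j : Fin d} (hjx : x j < 1) (hjy : y j < 1) :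
    f' y j ≤ f' x j := by
  set δ := min (1 - x j) (1 - y j) with hδdef
  have hδpos : 0 < δ := lt_min (by linarith) (by linarith)
  refine deriv_le_of_slope_le hδpos
    (derivSingle0 hgrad hy hδpos (by have := min_le_right (1 - x j) (1 - y j); linarith))
    (derivSingle0 hgrad hx hδpos (by have := min_le_left (1 - x j) (1 - y j); linarith)) ?_
  intro z hz
  have h1 := min_le_left (1 - x j) (1 - y j)
  have h2 := min_le_right (1 - x j) (1 - y j)
  have := hsub x y hx hy hxy j z hz.1.le
    (add_single_mem hx hz.1.le (by linarith [hz.2]))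
    (add_single_mem hy hz.1.le (by linarith [hz.2]))
  simpa using this

end OneFun

section OneFun2
variable {f : EuclideanSpace ℝ (Fin d) → ℝ} {f' : EuclideanSpace ℝ (Fin d) → EuclideanSpace ℝ (Fin d)}

/-- shrink the `j`-th coordinate by factor `1 - ε`. -/
def shr (ε : ℝ) (j : Fin d) (x : EuclideanSpace ℝ (Fin d)) : EuclideanSpace ℝ (Fin d) :=
  x + (-(ε * x j)) • EuclideanSpace.single j (1:ℝ)

lemma shr_apply (ε : ℝ) (j : Fin d) (x : EuclideanSpace ℝ (Fin d)) (i : Fin d) :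
    shr ε j x i = if i = j then (1 - ε) * x i else x i := by
  rw [shr, add_single_apply]
  by_cases h : i = j
  · subst h; simp [if_pos rfl]; ring
  · simp [if_neg h]

lemma shr_mem {x : EuclideanSpace ℝ (Fin d)} (hx : x ∈ cube d) {ε : ℝ} (hε : ε ∈ Set.Ioc (0:ℝ) 1)
    (j : Fin d) : shr ε j x ∈ cube d := by
  intro i
  have hxi := hx i
  rw [shr_apply]
  by_cases h : i = j
  · rw [if_pos h]
    constructor
    · exact mul_nonneg (by linarith [hε.2]) hxi.1
    · calc (1 - ε) * x i ≤ 1 * 1 := mul_le_mul (by linarith [hε.1]) hxi.2 hxi.1 one_pos.le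
        _ = 1 := one_mul 1
  · rwa [if_neg h]

lemma shr_lt_one {x : EuclideanSpace ℝ (Fin d)} (hx : x ∈ cube d) {ε : ℝ}
    (hε : ε ∈ Set.Ioc (0:ℝ) 1) (j : Fin d) : shr ε j x j < 1 := by
  rw [shr_apply, if_pos rfl]
  have hxi := hx j
  calc (1 - ε) * x j ≤ (1 - ε) * 1 := by
        apply mul_le_mul_of_nonneg_left hxi.2; linarith [hε.2]
    _ = 1 - ε := mul_one _
    _ < 1 := by linarith [hε.1]

lemma shr_le {x y : EuclideanSpace ℝ (Fin d)} (hxy : ∀ i, x i ≤ y i) {ε : ℝ}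
    (hε : ε ∈ Set.Ioc (0:ℝ) 1) (j : Fin d) (hx : x ∈ cube d) :
    ∀ i, shr ε j x i ≤ shr ε j y i := by
  intro i
  rw [shr_apply, shr_apply]
  by_cases h : i = j
  · rw [if_pos h, if_pos h]
    exact mul_le_mul_of_nonneg_left (hxy i) (by linarith [hε.2])
  · rw [if_neg h, if_neg h]; exact hxy i

lemma shr_tendsto (x : EuclideanSpace ℝ (Fin d)) (j : Fin d) :
    Filter.Tendsto (fun ε => shr ε j x) (nhdsWithin 0 (Set.Ioi 0)) (nhds x) := by
  have hc : Continuous (fun ε : ℝ => shr ε j x) := by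
    unfold shr; fun_prop
  have := hc.tendsto' 0 x (by simp [shr])
  exact this.mono_left nhdsWithin_le_nhds

lemma f'_shr_tendsto (hcont : ContinuousOn f' (cube d)) {x : EuclideanSpace ℝ (Fin d)}
    (hx : x ∈ cube d) (j k : Fin d) :
    Filter.Tendsto (fun ε => f' (shr ε j x) k) (nhdsWithin 0 (Set.Ioi 0)) (nhds (f' x k)) := by
  have h1 : Filter.Tendsto (fun ε => shr ε j x) (nhdsWithin 0 (Set.Ioi 0))
      (nhdsWithin x (cube d)) := by
    rw [tendsto_nhdsWithin_iff]
    refine ⟨shr_tendsto x j, ?_⟩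
    filter_upwards [Ioc_mem_nhdsGT_of_mem (Set.left_mem_Ico.2 one_pos)] with ε hε
    exact shr_mem hx hε j
  have h2 := (hcont x hx).tendsto.comp h1
  exact ((EuclideanSpace.proj k).continuous.tendsto _).comp h2

variable (hsub : DRSubmodularOn d f)
  (hmono : ∀ x ∈ cube d, ∀ y ∈ cube d, (∀ i, x i ≤ y i) → f x ≤ f y)
  (hgrad : ∀ x ∈ cube d, HasGradientWithinAt f (f' x) (cube d) x)
  (hcont : ContinuousOn f' (cube d))

include hmono hgrad hcont in
lemma grad_nonneg {x : EuclideanSpace ℝ (Fin d)} (hx : x ∈ cube d) (j : Fin d) :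
    0 ≤ f' x j := by
  refine ge_of_tendsto (f'_shr_tendsto hcont hx j j) ?_
  filter_upwards [Ioc_mem_nhdsGT_of_mem (Set.left_mem_Ico.2 one_pos)] with ε hε
  exact grad_nonneg' hmono hgrad (shr_mem hx hε j) (shr_lt_one hx hε j)

include hsub hgrad hcont in
lemma grad_anti {x y : EuclideanSpace ℝ (Fin d)} (hx : x ∈ cube d) (hy : y ∈ cube d)
    (hxy : ∀ i, x i ≤ y i) (j : Fin d) : f' y j ≤ f' x j := by
  refine le_of_tendsto_of_tendsto (f'_shr_tendsto hcont hy j j)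
    (f'_shr_tendsto hcont hx j j) ?_
  filter_upwards [Ioc_mem_nhdsGT_of_mem (Set.left_mem_Ico.2 one_pos)] with ε hε
  exact grad_anti' hsub hgrad (shr_mem hx hε j) (shr_mem hy hε j)
    (shr_le hxy hε j hx) (shr_lt_one hx hε j) (shr_lt_one hy hε j)

end OneFun2

section FTC
variable {f : EuclideanSpace ℝ (Fin d) → ℝ} {f' : EuclideanSpace ℝ (Fin d) → EuclideanSpace ℝ (Fin d)}
  (hgrad : ∀ x ∈ cube d, HasGradientWithinAt f (f' x) (cube d) x)
  (hcont : ContinuousOn f' (cube d))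

include hgrad in
lemma f_contOn : ContinuousOn f (cube d) := fun x hx =>
  ((hgrad x hx).differentiableWithinAt).continuousWithinAt

include hgrad hcont in
lemma ftc_segment {a b : EuclideanSpace ℝ (Fin d)} (ha : a ∈ cube d) (hb : b ∈ cube d) :
    f b - f a = ∫ t in (0:ℝ)..1, (inner ℝ (f' (a + t • (b - a))) (b - a) : ℝ) := by
  have hmaps : ∀ t ∈ Set.Icc (0:ℝ) 1, a + t • (b - a) ∈ cube d := fun t ht =>
    cube_convex.add_smul_sub_mem ha hb ht
  have hγcont : Continuous (fun t : ℝ => a + t • (b - a)) := by fun_prop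
  have hφcont : ContinuousOn (fun t : ℝ => f (a + t • (b - a))) (Set.Icc 0 1) :=
    (f_contOn hgrad).comp hγcont.continuousOn hmaps
  have hintcont : ContinuousOn (fun t : ℝ => (inner ℝ (f' (a + t • (b - a))) (b - a) : ℝ))
      (Set.Icc 0 1) := by
    have h1 : ContinuousOn (fun t : ℝ => f' (a + t • (b - a))) (Set.Icc 0 1) :=
      hcont.comp hγcont.continuousOn hmaps
    exact h1.inner continuousOn_const
  have := intervalIntegral.integral_eq_sub_of_hasDeriv_right_of_le zero_le_one hφcont
    (f' := fun t => (inner ℝ (f' (a + t • (b - a))) (b - a) : ℝ))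
    (fun t ht => by
      have hD := deriv_along hgrad a (b - a) (s := Set.Icc (0:ℝ) 1) hmaps (Set.mem_Icc_of_Ioo ht)
      exact hD.mono_of_mem_nhdsWithin (Icc_mem_nhdsGT_of_mem (Set.mem_Ico_of_Ioo ht)))
    (hintcont.intervalIntegrable_of_Icc zero_le_one)
  rw [this]
  simp

end FTC

section Main
variable {f : EuclideanSpace ℝ (Fin d) → ℝ} {f' : EuclideanSpace ℝ (Fin d) → EuclideanSpace ℝ (Fin d)}
  (hsub : DRSubmodularOn d f)
  (hmono : ∀ x ∈ cube d, ∀ y ∈ cube d, (∀ i, x i ≤ y i) → f x ≤ f y)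
  (hgrad : ∀ x ∈ cube d, HasGradientWithinAt f (f' x) (cube d) x)
  (hcont : ContinuousOn f' (cube d))

include hsub hmono hgrad hcont in
lemma concave_dir {u w : EuclideanSpace ℝ (Fin d)} (hu : u ∈ cube d)
    (huw : u + w ∈ cube d) (hw : ∀ i, 0 ≤ w i) :
    f (u + w) - f u ≤ (inner ℝ (f' u) w : ℝ) := by
  have hseg := ftc_segment hgrad hcont hu huw
  have hw' : u + w - u = w := by abel
  rw [hw'] at hseg
  rw [hseg]
  have hmaps : ∀ t ∈ Set.Icc (0:ℝ) 1, u + t • w ∈ cube d := by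
    intro t ht
    have := cube_convex.add_smul_sub_mem hu huw ht
    rwa [hw'] at this
  have hγcont : Continuous (fun t : ℝ => u + t • w) := by fun_prop
  have hintcont : ContinuousOn (fun t : ℝ => (inner ℝ (f' (u + t • w)) w : ℝ)) (Set.Icc 0 1) :=
    (hcont.comp hγcont.continuousOn hmaps).inner continuousOn_const
  have hbound : ∀ t ∈ Set.Icc (0:ℝ) 1, (inner ℝ (f' (u + t • w)) w : ℝ) ≤ (inner ℝ (f' u) w : ℝ) := by
    intro t ht
    simp only [PiLp.inner_apply, RCLike.inner_apply, conj_trivial]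
    refine Finset.sum_le_sum fun i _ => ?_
    refine mul_le_mul_of_nonneg_left ?_ (hw i)
    refine grad_anti hsub hgrad hcont hu (hmaps t ht) (fun i => ?_) i
    simp only [PiLp.add_apply, PiLp.smul_apply, smul_eq_mul]
    nlinarith [hw i, ht.1]
  calc (∫ t in (0:ℝ)..1, (inner ℝ (f' (u + t • w)) w : ℝ))
      ≤ ∫ t in (0:ℝ)..1, (inner ℝ (f' u) w : ℝ) := by
        apply intervalIntegral.integral_mono_on zero_le_one
          (hintcont.intervalIntegrable_of_Icc zero_le_one) intervalIntegrable_const hbound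
    _ = (inner ℝ (f' u) w : ℝ) := by simp

include hsub hmono hgrad hcont in
lemma key_ineq {x u : EuclideanSpace ℝ (Fin d)} (hx : x ∈ cube d) (hu : u ∈ cube d) :
    f x - f u ≤ (inner ℝ (f' u) x : ℝ) := by
  classical
  set w : EuclideanSpace ℝ (Fin d) := WithLp.toLp 2 (fun i => max (x i) (u i) - u i : Fin d → ℝ) with hwdef
  have hwapp : ∀ i, w i = max (x i) (u i) - u i := fun i => rfl
  have hw0 : ∀ i, 0 ≤ w i := fun i => by rw [hwapp]; simp [le_max_right]
  have huw : ∀ i, (u + w) i = max (x i) (u i) := fun i => by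
    simp only [PiLp.add_apply, hwapp]; ring
  have huwcube : u + w ∈ cube d := by
    intro i
    rw [huw]
    exact ⟨le_max_of_le_right (hu i).1, max_le (hx i).2 (hu i).2⟩
  have h1 : f x ≤ f (u + w) := by
    refine hmono x hx _ huwcube fun i => ?_
    rw [huw]; exact le_max_left _ _
  have h2 := concave_dir hsub hmono hgrad hcont hu huwcube hw0
  have h3 : (inner ℝ (f' u) w : ℝ) ≤ (inner ℝ (f' u) x : ℝ) := by
    simp only [PiLp.inner_apply, RCLike.inner_apply, conj_trivial]
    refine Finset.sum_le_sum fun i _ => ?_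
    refine mul_le_mul_of_nonneg_right ?_ (grad_nonneg hmono hgrad hcont hu i)
    rw [hwapp]
    rcases le_total (x i) (u i) with h | h
    · rw [max_eq_right h]; simp [(hx i).1]
    · rw [max_eq_left h]; linarith [(hu i).1]
  linarith

end Main

section Boost
variable {f : EuclideanSpace ℝ (Fin d) → ℝ} {f' : EuclideanSpace ℝ (Fin d) → EuclideanSpace ℝ (Fin d)}
  (hsub : DRSubmodularOn d f)
  (hmono : ∀ x ∈ cube d, ∀ y ∈ cube d, (∀ i, x i ≤ y i) → f x ≤ f y)
  (hgrad : ∀ x ∈ cube d, HasGradientWithinAt f (f' x) (cube d) x)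
  (hcont : ContinuousOn f' (cube d))
  (hzero : f 0 = 0)

include hgrad in
lemma scale_deriv {y : EuclideanSpace ℝ (Fin d)} (hy : y ∈ cube d) {t : ℝ}
    (ht : t ∈ Set.Icc (0:ℝ) 1) :
    HasDerivWithinAt (fun z : ℝ => f (z • y)) (inner ℝ (f' (t • y)) y : ℝ) (Set.Icc 0 1) t := by
  have h := deriv_along hgrad 0 y (s := Set.Icc (0:ℝ) 1)
    (fun z hz => by simpa using smul_mem_cube hy hz) ht
  simpa using h

include hsub hmono hgrad hcont hzero in
lemma boosting {x y : EuclideanSpace ℝ (Fin d)} (hx : x ∈ cube d) (hy : y ∈ cube d) :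
    (1 - 1 / Real.exp 1) * f x - f y ≤
      (inner ℝ (∫ z in (0:ℝ)..1, Real.exp (z - 1) • f' (z • y)) (x - y) : ℝ) := by
  have hsm : ∀ z ∈ Set.Icc (0:ℝ) 1, z • y ∈ cube d := fun z hz => smul_mem_cube hy hz
  have hγcont : Continuous (fun z : ℝ => z • y) := by fun_prop
  have hf'cont : ContinuousOn (fun z : ℝ => f' (z • y)) (Set.Icc 0 1) :=
    hcont.comp hγcont.continuousOn hsm
  have hFcont : ContinuousOn (fun z : ℝ => f (z • y)) (Set.Icc 0 1) :=
    (f_contOn hgrad).comp hγcont.continuousOn hsm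
  have hecont : Continuous (fun z : ℝ => Real.exp (z - 1)) := by fun_prop
  -- the integrand of the inner product
  have hstep1 : (inner ℝ (∫ z in (0:ℝ)..1, Real.exp (z - 1) • f' (z • y)) (x - y) : ℝ) =
      ∫ z in (0:ℝ)..1, Real.exp (z - 1) * (inner ℝ (f' (z • y)) (x - y) : ℝ) := by
    have h := ContinuousLinearMap.intervalIntegral_comp_comm (μ := volume) (innerSL ℝ (x - y))
      ((hecont.continuousOn.smul hf'cont).intervalIntegrable_of_Icc zero_le_one)
    simp only [innerSL_apply_apply, Pi.smul_apply'] at h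
    rw [real_inner_comm, ← h]
    congr 1; funext z
    rw [real_inner_smul_right, real_inner_comm]
  -- FTC for D z = exp(z-1) * f(z•y)
  have hDderiv : ∀ t ∈ Set.Icc (0:ℝ) 1,
      HasDerivWithinAt (fun z : ℝ => Real.exp (z - 1) * f (z • y))
        (Real.exp (t - 1) * f (t • y) + Real.exp (t - 1) * (inner ℝ (f' (t • y)) y : ℝ))
        (Set.Icc 0 1) t := by
    intro t ht
    have he : HasDerivAt (fun z : ℝ => Real.exp (z - 1)) (Real.exp (t - 1)) t := by
      have := (Real.hasDerivAt_exp (t - 1)).comp t ((hasDerivAt_id t).sub_const 1)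
      simpa [Function.comp_def] using this
    exact he.hasDerivWithinAt.mul (scale_deriv hgrad hy ht)
  have hDintcont : ContinuousOn (fun z : ℝ =>
      Real.exp (z - 1) * f (z • y) + Real.exp (z - 1) * (inner ℝ (f' (z • y)) y : ℝ))
      (Set.Icc 0 1) := by
    apply ContinuousOn.add
    · exact hecont.continuousOn.mul hFcont
    · exact hecont.continuousOn.mul (hf'cont.inner continuousOn_const)
  have hftcD : (∫ z in (0:ℝ)..1,
      (Real.exp (z - 1) * f (z • y) + Real.exp (z - 1) * (inner ℝ (f' (z • y)) y : ℝ))) = f y := by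
    have := intervalIntegral.integral_eq_sub_of_hasDeriv_right_of_le zero_le_one
      (hecont.continuousOn.mul hFcont)
      (fun t ht => (hDderiv t (Set.mem_Icc_of_Ioo ht)).mono_of_mem_nhdsWithin
        (Icc_mem_nhdsGT_of_mem (Set.mem_Ico_of_Ioo ht)))
      (hDintcont.intervalIntegrable_of_Icc zero_le_one)
    rw [this]
    simp [hzero]
  -- pointwise inequality
  have hpt : ∀ z ∈ Set.Icc (0:ℝ) 1,
      Real.exp (z - 1) * f x -
        (Real.exp (z - 1) * f (z • y) + Real.exp (z - 1) * (inner ℝ (f' (z • y)) y : ℝ)) ≤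
      Real.exp (z - 1) * (inner ℝ (f' (z • y)) (x - y) : ℝ) := by
    intro z hz
    have hk := key_ineq hsub hmono hgrad hcont hx (hsm z hz)
    have he : (0:ℝ) < Real.exp (z - 1) := Real.exp_pos _
    rw [inner_sub_right]
    nlinarith [hk, he]
  -- integrate
  have hint1 : (∫ z in (0:ℝ)..1, Real.exp (z - 1) * f x) = (1 - 1 / Real.exp 1) * f x := by
    rw [intervalIntegral.integral_mul_const]
    have : (∫ z in (0:ℝ)..1, Real.exp (z - 1)) = 1 - 1 / Real.exp 1 := by
      rw [intervalIntegral.integral_comp_sub_right (fun z => Real.exp z) 1, integral_exp]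
      simp [Real.exp_neg, one_div]
    rw [this]
  rw [hstep1]
  have hmono_int : (∫ z in (0:ℝ)..1,
      (Real.exp (z - 1) * f x -
        (Real.exp (z - 1) * f (z • y) + Real.exp (z - 1) * (inner ℝ (f' (z • y)) y : ℝ)))) ≤
      ∫ z in (0:ℝ)..1, Real.exp (z - 1) * (inner ℝ (f' (z • y)) (x - y) : ℝ) := by
    apply intervalIntegral.integral_mono_on zero_le_one
    · exact (((hecont.continuousOn.mul continuousOn_const).sub hDintcont).intervalIntegrable_of_Icc
        zero_le_one)
    · exact ((hecont.continuousOn.mul (hf'cont.inner continuousOn_const)).intervalIntegrable_of_Icc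
        zero_le_one)
    · exact hpt
  have hsplit : (∫ z in (0:ℝ)..1,
      (Real.exp (z - 1) * f x -
        (Real.exp (z - 1) * f (z • y) + Real.exp (z - 1) * (inner ℝ (f' (z • y)) y : ℝ)))) =
      (1 - 1 / Real.exp 1) * f x - f y := by
    rw [intervalIntegral.integral_sub (f := fun z => Real.exp (z - 1) * f x)
      ((hecont.continuousOn.mul continuousOn_const).intervalIntegrable_of_Icc zero_le_one)
      (hDintcont.intervalIntegrable_of_Icc zero_le_one), hint1, hftcD]
  linarith [hmono_int, hsplit.symm.le]

end Boost

section Last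
variable {f : EuclideanSpace ℝ (Fin d) → ℝ} {f' : EuclideanSpace ℝ (Fin d) → EuclideanSpace ℝ (Fin d)}
  {G : ℝ}
  (hgrad : ∀ x ∈ cube d, HasGradientWithinAt f (f' x) (cube d) x)
  (hcont : ContinuousOn f' (cube d))
  (hbdd : ∀ x ∈ cube d, ‖f' x‖ ≤ G)

include hgrad hcont hbdd in
lemma lipschitz_bound {a b : EuclideanSpace ℝ (Fin d)} (ha : a ∈ cube d) (hb : b ∈ cube d) :
    f a - f b ≤ G * ‖a - b‖ := by
  rw [ftc_segment hgrad hcont hb ha]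
  have hmaps : ∀ t ∈ Set.Icc (0:ℝ) 1, b + t • (a - b) ∈ cube d := fun t ht =>
    cube_convex.add_smul_sub_mem hb ha ht
  have hγcont : Continuous (fun t : ℝ => b + t • (a - b)) := by fun_prop
  have hintcont : ContinuousOn (fun t : ℝ => (inner ℝ (f' (b + t • (a - b))) (a - b) : ℝ))
      (Set.Icc 0 1) := (hcont.comp hγcont.continuousOn hmaps).inner continuousOn_const
  calc (∫ t in (0:ℝ)..1, (inner ℝ (f' (b + t • (a - b))) (a - b) : ℝ))
      ≤ ∫ _ in (0:ℝ)..1, G * ‖a - b‖ := by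
        apply intervalIntegral.integral_mono_on zero_le_one
          (hintcont.intervalIntegrable_of_Icc zero_le_one) intervalIntegrable_const
        intro t ht
        calc (inner ℝ (f' (b + t • (a - b))) (a - b) : ℝ)
            ≤ ‖f' (b + t • (a - b))‖ * ‖a - b‖ := real_inner_le_norm _ _
          _ ≤ G * ‖a - b‖ :=
              mul_le_mul_of_nonneg_right (hbdd _ (hmaps t ht)) (norm_nonneg _)
    _ = G * ‖a - b‖ := by simp
  
include hcont hbdd in
lemma g_norm_le {y : EuclideanSpace ℝ (Fin d)} (hy : y ∈ cube d) :
    ‖∫ z in (0:ℝ)..1, Real.exp (z - 1) • f' (z • y)‖ ≤ G := by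
  have hG : 0 ≤ G := le_trans (norm_nonneg _) (hbdd 0 zero_mem_cube)
  have := intervalIntegral.norm_integral_le_of_norm_le_const
    (C := G) (f := fun z : ℝ => Real.exp (z - 1) • f' (z • y)) (a := 0) (b := 1) ?_
  · simpa using this
  · intro z hz
    rw [Set.uIoc_of_le zero_le_one] at hz
    rw [norm_smul, Real.norm_eq_abs, abs_of_pos (Real.exp_pos _)]
    have h1 : Real.exp (z - 1) ≤ 1 := Real.exp_le_one_iff.2 (by linarith [hz.2])
    calc Real.exp (z - 1) * ‖f' (z • y)‖ ≤ 1 * G := by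
          apply mul_le_mul h1 (hbdd _ (smul_mem_cube hy ⟨hz.1.le, hz.2⟩)) (norm_nonneg _) one_pos.le
      _ = G := one_mul G

end Last

end Aux

/-- deterministic core of Theorem 5: the monotone variant of the
reduction based on the boosting technique, with approximation ratio `1 - 1/e`. -/
theorem reduction_boosting_monotone
    (d n T : ℕ) (hd : 1 ≤ d) (hn : 1 ≤ n) (hT : 1 ≤ T)
    (K : Set (EuclideanSpace ℝ (Fin d))) (hKcvx : Convex ℝ K) (hKX : K ⊆ cube d)
    (G : ℝ)
    (f : Fin T → Fin n → EuclideanSpace ℝ (Fin d) → ℝ)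
    (f' : Fin T → Fin n → EuclideanSpace ℝ (Fin d) → EuclideanSpace ℝ (Fin d))
    (hsub : ∀ t j, DRSubmodularOn d (f t j))
    (hnonneg : ∀ t j, ∀ x ∈ cube d, 0 ≤ f t j x)
    (hmono : ∀ t j, ∀ x ∈ cube d, ∀ y ∈ cube d, (∀ i, x i ≤ y i) → f t j x ≤ f t j y)
    (hzero : ∀ t j, f t j 0 = 0)
    (hgrad : ∀ t j, ∀ x ∈ cube d, HasGradientWithinAt (f t j) (f' t j x) (cube d) x)
    (hcont : ∀ t j, ContinuousOn (f' t j) (cube d))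
    (hbdd : ∀ t j, ∀ x ∈ cube d, ‖f' t j x‖ ≤ G)
    (xhat : Fin T → Fin n → EuclideanSpace ℝ (Fin d))
    (hxhat : ∀ t j, xhat t j ∈ K)
    (g : Fin T → Fin n → EuclideanSpace ℝ (Fin d) → EuclideanSpace ℝ (Fin d))
    (hg : ∀ t j, ∀ x ∈ K, g t j x = ∫ z in (0:ℝ)..1, Real.exp (z - 1) • f' t j (z • x)) :
    ∀ i : Fin n, ∀ x ∈ K,
      (1 - 1 / Real.exp 1) * (∑ t, ∑ j, f t j x) - ∑ t, ∑ j, f t j (xhat t i) ≤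
        (∑ t, ∑ j, (inner ℝ (g t j (xhat t j)) (x - xhat t i) : ℝ)) +
          2 * G * ∑ t, ∑ j, ‖xhat t j - xhat t i‖ := by
  intro i x hxK
  have hx : x ∈ cube d := hKX hxK
  have key : ∀ t j, (1 - 1 / Real.exp 1) * f t j x - f t j (xhat t i) ≤
      (inner ℝ (g t j (xhat t j)) (x - xhat t i) : ℝ) + 2 * G * ‖xhat t j - xhat t i‖ := by
    intro t j
    set y := xhat t j with hy
    set p := xhat t i with hp
    have hyc : y ∈ cube d := hKX (hxhat t j)
    have hpc : p ∈ cube d := hKX (hxhat t i)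
    have hgval : g t j y = ∫ z in (0:ℝ)..1, Real.exp (z - 1) • f' t j (z • y) :=
      hg t j y (hxhat t j)
    have hboost : (1 - 1 / Real.exp 1) * f t j x - f t j y ≤ (inner ℝ (g t j y) (x - y) : ℝ) := by
      rw [hgval]
      exact boosting (hsub t j) (hmono t j) (hgrad t j) (hcont t j) (hzero t j) hx hyc
    have hlip : f t j y - f t j p ≤ G * ‖y - p‖ :=
      lipschitz_bound (hgrad t j) (hcont t j) (hbdd t j) hyc hpc
    have hgnorm : ‖g t j y‖ ≤ G := by
      rw [hgval]; exact g_norm_le (hcont t j) (hbdd t j) hyc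
    have hinner : -(G * ‖y - p‖) ≤ (inner ℝ (g t j y) (y - p) : ℝ) := by
      have h1 : |(inner ℝ (g t j y) (y - p) : ℝ)| ≤ ‖g t j y‖ * ‖y - p‖ := abs_real_inner_le_norm _ _
      have h2 : ‖g t j y‖ * ‖y - p‖ ≤ G * ‖y - p‖ :=
        mul_le_mul_of_nonneg_right hgnorm (norm_nonneg _)
      have := neg_abs_le (inner ℝ (g t j y) (y - p) : ℝ)
      linarith
    have hsplit : (inner ℝ (g t j y) (x - p) : ℝ) =
        (inner ℝ (g t j y) (x - y) : ℝ) + (inner ℝ (g t j y) (y - p) : ℝ) := by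
      rw [← inner_add_right]
      congr 1
      abel
    rw [hsplit]
    linarith
  have hLHS : (1 - 1 / Real.exp 1) * (∑ t, ∑ j, f t j x) - ∑ t, ∑ j, f t j (xhat t i) =
      ∑ t, ∑ j, ((1 - 1 / Real.exp 1) * f t j x - f t j (xhat t i)) := by
    simp_rw [Finset.mul_sum, ← Finset.sum_sub_distrib]
  have hRHS : (∑ t, ∑ j, (inner ℝ (g t j (xhat t j)) (x - xhat t i) : ℝ)) +
      2 * G * ∑ t, ∑ j, ‖xhat t j - xhat t i‖ =
      ∑ t, ∑ j, ((inner ℝ (g t j (xhat t j)) (x - xhat t i) : ℝ) +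
        2 * G * ‖xhat t j - xhat t i‖) := by
    simp_rw [Finset.sum_add_distrib, Finset.mul_sum]
  rw [hLHS, hRHS]
  exact Finset.sum_le_sum fun t _ => Finset.sum_le_sum fun j _ => key t j
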